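/- Let β ∈ ℕⁿ be written as β = ∑_{j=0}^{r} λⱼ α(j) with α(j) ∈ (2ℕ)ⁿ, λⱼ ≥ 0, ∑ⱼ λⱼ = 1, and let f_{α(j)} > 0. If the coefficient f_β satisfies |f_β| ≤ ∏_{j: λⱼ>0} (f_{α(j)}/λⱼ)^{λⱼ}, then the circuit polynomial f(x) = ∑_{j=0}^{r} f_{α(j)} x^{α(j)} + f_β x^β is nonnegative on the positive orthant (0,∞)ⁿ. -/

import Mathlib

theorem stmt_5 (n r : ℕ) (α : Fin (r + 1) → Fin n → ℕ) (β : Fin n → ℕ)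
    (lam : Fin (r + 1) → ℝ) (coef : Fin (r + 1) → ℝ) (fβ : ℝ)
    (hα : ∀ j i, Even (α j i))
    (hlam : ∀ j, 0 ≤ lam j) (hsum : ∑ j, lam j = 1)
    (hβ : ∀ i, (β i : ℝ) = ∑ j, lam j * (α j i : ℝ))
    (hcoef : ∀ j, 0 < coef j)
    (hfβ : |fβ| ≤ ∏ j ∈ Finset.univ.filter (fun j => lam j ≠ 0),
        (coef j / lam j) ^ (lam j)) :
    ∀ x : Fin n → ℝ, (∀ i, 0 < x i) →
      0 ≤ (∑ j, coef j * ∏ i, x i ^ (α j i)) + fβ * ∏ i, x i ^ (β i) := by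
  intro x hx
  set P : Fin (r + 1) → ℝ := fun j => ∏ i, x i ^ (α j i) with hP
  have hPpos : ∀ j, 0 < P j := fun j =>
    Finset.prod_pos fun i _ => pow_pos (hx i) _
  set X : ℝ := ∏ i, x i ^ (β i) with hX
  have hXpos : 0 < X := Finset.prod_pos fun i _ => pow_pos (hx i) _
  set z : Fin (r + 1) → ℝ := fun j => (coef j / lam j) * P j with hz
  -- AM-GM
  have amgm : ∏ j, z j ^ (lam j) ≤ ∑ j, lam j * z j := by
    refine Real.geom_mean_le_arith_mean_weighted _ _ _ (fun j _ => hlam j) hsum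
      (fun j _ => ?_)
    exact mul_nonneg (div_nonneg (hcoef j).le (hlam j)) (hPpos j).le
  -- RHS of AM-GM equals filtered sum ≤ sum of y's
  have hsum_le : ∑ j, lam j * z j ≤ ∑ j, coef j * P j := by
    apply Finset.sum_le_sum
    intro j _
    by_cases h : lam j = 0
    · simp [h]
      exact mul_nonneg (hcoef j).le (hPpos j).le
    · rw [hz]
      field_simp
      exact le_rfl
  -- product splits
  have hzprod : ∏ j, z j ^ (lam j) =
      (∏ j ∈ Finset.univ.filter (fun j => lam j ≠ 0), (coef j / lam j) ^ (lam j)) *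
        ∏ j, P j ^ (lam j) := by
    rw [Finset.prod_filter, ← Finset.prod_mul_distrib]
    apply Finset.prod_congr rfl
    intro j _
    by_cases h : lam j = 0
    · simp [h, hz, Real.rpow_zero]
    · simp [h, hz, Real.mul_rpow (div_nonneg (hcoef j).le (hlam j)) (hPpos j).le]
  -- ∏ P^lam = X
  have hPX : ∏ j, P j ^ (lam j) = X := by
    have : ∀ j, P j ^ (lam j) = ∏ i, x i ^ (lam j * (α j i : ℝ)) := by
      intro j
      rw [hP, ← Real.finset_prod_rpow _ _ (fun i _ => (pow_pos (hx i) _).le)]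
      apply Finset.prod_congr rfl
      intro i _
      rw [← Real.rpow_natCast (x i) (α j i), ← Real.rpow_mul (hx i).le,
        mul_comm]
    simp_rw [this]
    rw [Finset.prod_comm]
    apply Finset.prod_congr rfl
    intro i _
    rw [← Real.rpow_natCast (x i) (β i), hβ i, ← Real.rpow_sum_of_pos (hx i)]
  -- combine: |fβ| * X ≤ ∑ coef * P
  have key : |fβ| * X ≤ ∑ j, coef j * P j := by
    calc |fβ| * X ≤ (∏ j ∈ Finset.univ.filter (fun j => lam j ≠ 0),
          (coef j / lam j) ^ (lam j)) * X := by
          exact mul_le_mul_of_nonneg_right hfβ hXpos.le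
      _ = ∏ j, z j ^ (lam j) := by rw [hzprod, hPX]
      _ ≤ ∑ j, lam j * z j := amgm
      _ ≤ ∑ j, coef j * P j := hsum_le
  have : -(fβ * X) ≤ |fβ| * X := by
    rw [← neg_mul]
    exact mul_le_mul_of_nonneg_right (neg_le_abs fβ) hXpos.le
  linarith
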